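/- Let H be a compact Lie group equipped with a bi-invariant metric inducing its topology, and let q: H → (ℝ/ℤ)^d be a continuous surjective group homomorphism with d ≥ 1. For each n ≥ 1 let H{n} = q⁻¹(T[n]) be the preimage of the subgroup T[n] = ((1/n)ℤ/ℤ)^d of n-torsion points of the torus. Then each H{n} is a proper closed subgroup of H, and the Hausdorff distance between H{n} and H tends to 0 as n → ∞. In particular, a compact Lie group admitting a continuous surjective homomorphism onto a torus of positive dimension is not an isolated point of Sub(H) in the h-topology; equivalently, if K is a closed normal subgroup of H with H/K a torus of positive dimension, then H is a limit of proper closed subgroups of itself. -/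

import Mathlib

open Pointwise


open TopologicalSpace

/-- A topological group is a Lie group if it carries a compatible smooth manifold
structure modelled on some Euclidean space making multiplication and inversion smooth. -/
def IsLieGroupStruct (G : Type*) [TopologicalSpace G] [Group G] : Prop :=
  ∃ n : ℕ, ∃ _ : ChartedSpace (EuclideanSpace ℝ (Fin n)) G,
    LieGroup (modelWithCornersSelf ℝ (EuclideanSpace ℝ (Fin n))) (⊤ : ℕ∞) G

/-- A metric on a group is bi-invariant if left and right translations are isometries. -/
def BiInvariantMetric (G : Type*) [Group G] [MetricSpace G] : Prop :=
  ∀ g x y : G, dist (g * x) (g * y) = dist x y ∧ dist (x * g) (y * g) = dist x y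

/-- The space `Sub(G)` of closed subgroups of `G`. -/
abbrev SubG (G : Type*) [Group G] [TopologicalSpace G] :=
  {H : Subgroup G // IsClosed (H : Set G)}

/-- The `h`-topology on `Sub(G)`, induced by the Hausdorff (extended) metric on the
space of closed subsets of the metric space `G`. -/
noncomputable instance SubG.instTopologicalSpace (G : Type*) [Group G] [MetricSpace G] :
    TopologicalSpace (SubG G) :=
  TopologicalSpace.induced
    (fun H : SubG G => (⟨(H.1 : Set G), H.2⟩ : TopologicalSpace.Closeds G))
    inferInstance

/-- `G` itself, as a point of `Sub(G)`. -/
def topSub (G : Type*) [Group G] [TopologicalSpace G] : SubG G :=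
  ⟨⊤, by rw [Subgroup.coe_top]; exact isClosed_univ⟩

/-- The subgroup `T[n]` of `n`-torsion points of the standard `d`-dimensional torus
(modelled multiplicatively as `(Fin d) → Circle`, where `Circle ≅ ℝ/ℤ`). -/
noncomputable def torsionSub (d n : ℕ) : Subgroup (Fin d → Circle) where
  carrier := {v | ∀ i, v i ^ n = 1}
  one_mem' := fun i => one_pow n
  mul_mem' := by
    intro a b ha hb i
    rw [Pi.mul_apply, mul_pow, ha i, hb i, one_mul]
  inv_mem' := by
    intro a ha i
    rw [Pi.inv_apply, inv_pow, ha i, inv_one]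

lemma mem_torsionSub {d n : ℕ} {v : Fin d → Circle} : v ∈ torsionSub d n ↔ ∀ i, v i ^ n = 1 :=
  Iff.rfl

lemma circleExp_pow (t : ℝ) (n : ℕ) : Circle.exp t ^ n = Circle.exp (n * t) := by
  induction n with
  | zero => simp
  | succ n ih => rw [pow_succ, ih, ← Circle.exp_add]; congr 1; push_cast; ring

lemma isOpenMap_of_compactGroup {H : Type*} [Group H] [TopologicalSpace H] [IsTopologicalGroup H]
    [CompactSpace H] {G : Type*} [Group G] [TopologicalSpace G] [IsTopologicalGroup G] [T2Space G]
    (q : H →* G) (hqc : Continuous q) (hqs : Function.Surjective q) : IsOpenMap q := by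
  intro U hU
  set S : Set H := U * (q.ker : Set H) with hSdef
  have hS : IsOpen S := hU.mul_right
  have hSsat : S * (q.ker : Set H) = S := by rw [hSdef, mul_assoc, coe_mul_coe]
  have himg : q '' S = q '' U := by
    apply Set.Subset.antisymm
    · rintro _ ⟨x, hx, rfl⟩
      obtain ⟨u, hu, k, hk, rfl⟩ := hx
      exact ⟨u, hu, by rw [map_mul, MonoidHom.mem_ker.mp hk, mul_one]⟩
    · exact Set.image_mono (fun u hu => ⟨u, hu, 1, Subgroup.one_mem _, mul_one u⟩)
  rw [← himg, ← isClosed_compl_iff]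
  have hcompl : (q '' S)ᶜ = q '' Sᶜ := by
    ext y
    constructor
    · intro hy
      obtain ⟨x, rfl⟩ := hqs y
      exact ⟨x, fun hx => hy ⟨x, hx, rfl⟩, rfl⟩
    · rintro ⟨x, hx, rfl⟩ ⟨s, hs, hsx⟩
      apply hx
      have hker : s⁻¹ * x ∈ q.ker := by
        rw [MonoidHom.mem_ker, map_mul, map_inv, hsx, inv_mul_cancel]
      have hx' : x ∈ S * (q.ker : Set H) := by
        have := Set.mul_mem_mul hs hker
        rwa [mul_inv_cancel_left] at this
      rw [hSsat] at hx'
      exact hx'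
  rw [hcompl]
  exact ((hS.isClosed_compl).isCompact.image hqc).isClosed

lemma torsionSub_closed (d n : ℕ) : IsClosed ((torsionSub d n : Subgroup _) : Set (Fin d → Circle)) := by
  have h : ((torsionSub d n : Subgroup _) : Set (Fin d → Circle))
      = ⋂ i, {v : Fin d → Circle | v i ^ n = 1} := by
    ext v
    simp only [Set.mem_iInter, Set.mem_setOf_eq, SetLike.mem_coe, mem_torsionSub]
  rw [h]
  exact isClosed_iInter fun i => isClosed_eq ((continuous_apply i).pow n) continuous_const

lemma torsionSub_ne_top (d n : ℕ) (hd : 1 ≤ d) (hn : 1 ≤ n) : torsionSub d n ≠ ⊤ := by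
  intro htop
  have hv : (fun _ : Fin d => Circle.exp (Real.pi / n)) ∈ torsionSub d n :=
    htop ▸ Subgroup.mem_top _
  have h1 := hv ⟨0, hd⟩
  rw [circleExp_pow] at h1
  have hne : (n : ℝ) ≠ 0 := Nat.cast_ne_zero.mpr (by omega)
  rw [mul_div_cancel₀ _ hne] at h1
  have : (Circle.exp Real.pi : ℂ) = (1 : Circle) := by rw [h1]
  rw [Circle.coe_exp, Complex.exp_pi_mul_I] at this
  norm_num at this

lemma key_approx {H : Type*} [Group H] [MetricSpace H] [IsTopologicalGroup H] [CompactSpace H]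
    (hbi : BiInvariantMetric H) {d : ℕ} (q : H →* (Fin d → Circle)) (hqc : Continuous q)
    (hqs : Function.Surjective q) {ε : ℝ} (hε : 0 < ε) :
    ∃ N : ℕ, 1 ≤ N ∧ ∀ n, N ≤ n → ∀ x : H, ∃ z : H,
      z ∈ (torsionSub d n).comap q ∧ dist x z ≤ ε := by
  have hopen : IsOpenMap q := isOpenMap_of_compactGroup q hqc hqs
  have hV : IsOpen (q '' Metric.ball (1:H) ε) := hopen _ Metric.isOpen_ball
  set F : (Fin d → ℝ) → (Fin d → Circle) := fun θ i => Circle.exp (θ i) with hFdef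
  have hFc : Continuous F := continuous_pi fun i => Circle.exp.continuous.comp (continuous_apply i)
  have h0 : (0 : Fin d → ℝ) ∈ F ⁻¹' (q '' Metric.ball (1:H) ε) := by
    refine Set.mem_preimage.mpr ⟨1, Metric.mem_ball_self hε, ?_⟩
    rw [map_one]
    funext i
    simp [hFdef]
  obtain ⟨δ, hδ, hball⟩ := Metric.mem_nhds_iff.mp ((hV.preimage hFc).mem_nhds h0)
  refine ⟨⌈Real.pi / δ⌉₊ + 1, by omega, fun n hn x => ?_⟩
  have hn0 : 0 < n := by omega
  have hnR : (0:ℝ) < n := Nat.cast_pos.mpr hn0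
  have hπn : Real.pi / n < δ := by
    have h1 : Real.pi / δ < n := by
      calc Real.pi / δ ≤ ⌈Real.pi / δ⌉₊ := Nat.le_ceil _
        _ < n := by exact_mod_cast Nat.lt_of_lt_of_le (Nat.lt_succ_self _) hn
    rw [div_lt_iff₀ hδ] at h1
    rw [div_lt_iff₀ hnR]
    linarith
  set y := q x with hy
  set k : Fin d → ℤ := fun i => round ((n : ℝ) * Complex.arg (y i) / (2 * Real.pi)) with hk
  set θ : Fin d → ℝ := fun i => 2 * Real.pi * (k i) / n - Complex.arg (y i) with hθdef
  have hθ : ∀ i, |θ i| < δ := by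
    intro i
    have h2π : (0:ℝ) < 2 * Real.pi := by positivity
    have h1 : |(k i : ℝ) - (n : ℝ) * Complex.arg (y i) / (2 * Real.pi)| ≤ 1/2 := by
      simpa [hk, abs_sub_comm] using abs_sub_round ((n : ℝ) * Complex.arg (y i) / (2 * Real.pi))
    have h2 : θ i = (2 * Real.pi / n) * ((k i : ℝ) - (n : ℝ) * Complex.arg (y i) / (2 * Real.pi)) := by
      rw [hθdef]
      field_simp
    calc |θ i| = (2 * Real.pi / n) * |(k i : ℝ) - (n : ℝ) * Complex.arg (y i) / (2 * Real.pi)| := by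
          rw [h2, abs_mul, abs_of_nonneg (by positivity : (0:ℝ) ≤ 2 * Real.pi / n)]
      _ ≤ (2 * Real.pi / n) * (1/2) := mul_le_mul_of_nonneg_left h1 (by positivity)
      _ = Real.pi / n := by ring
      _ < δ := hπn
  have hθmem : θ ∈ Metric.ball (0 : Fin d → ℝ) δ := by
    rw [Metric.mem_ball, dist_pi_lt_iff hδ]
    intro i
    simpa [Real.dist_eq] using hθ i
  obtain ⟨h, hhball, hqh⟩ := hball hθmem
  refine ⟨x * h, ?_, ?_⟩
  · rw [Subgroup.mem_comap, mem_torsionSub]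
    intro i
    have hqhi : q h i = Circle.exp (θ i) := congrFun hqh i
    have hyi : Circle.exp (Complex.arg ((y i : ℂ))) = y i := Circle.exp_arg (y i)
    have hq : q (x * h) i = Circle.exp (2 * Real.pi * (k i) / n) := by
      rw [map_mul, Pi.mul_apply, hqhi, ← hy, ← hyi, ← Circle.exp_add]
      congr 1
      rw [hθdef]
      ring
    rw [hq, circleExp_pow]
    have harg : (n : ℝ) * (2 * Real.pi * (k i) / n) = (k i : ℝ) * (2 * Real.pi) := by
      field_simp
    rw [harg]
    exact Circle.exp_int_mul_two_pi (k i)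
  · have h1 := (hbi x 1 h).1
    rw [mul_one] at h1
    rw [h1, dist_comm]
    exact le_of_lt (Metric.mem_ball.mp hhball)

/-- **Statement 18.** Let `H` be a compact Lie group with a bi-invariant metric inducing
its topology, and let `q : H → (ℝ/ℤ)^d` be a continuous surjective homomorphism with
`d ≥ 1`.  For `n ≥ 1` let `H{n} = q⁻¹(T[n])`.  Then each `H{n}` is a proper closed
subgroup of `H`, and the Hausdorff distance between `H{n}` and `H` tends to `0` as
`n → ∞`.  In particular `H` is not an isolated point of `Sub(H)` in the `h`-topology:
it is a limit of proper closed subgroups of itself. -/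
theorem not_isolated_of_surjects_onto_torus
    {H : Type*} [Group H] [MetricSpace H] [IsTopologicalGroup H] [CompactSpace H]
    (hbi : BiInvariantMetric H) (hlie : IsLieGroupStruct H)
    (d : ℕ) (hd : 1 ≤ d)
    (q : H →* (Fin d → Circle)) (hqc : Continuous q) (hqs : Function.Surjective q) :
    (∀ n : ℕ, 1 ≤ n →
      (torsionSub d n).comap q ≠ ⊤ ∧ IsClosed (((torsionSub d n).comap q : Subgroup H) : Set H)) ∧
    Filter.Tendsto
      (fun n : ℕ => Metric.hausdorffDist (((torsionSub d n).comap q : Subgroup H) : Set H) Set.univ)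
      Filter.atTop (nhds 0) ∧
    ¬ IsOpen ({topSub H} : Set (SubG H)) ∧
    ∃ u : ℕ → SubG H, (∀ n, u n ≠ topSub H) ∧
      Filter.Tendsto u Filter.atTop (nhds (topSub H)) := by
    -- Part 1
  have part1 : ∀ n : ℕ, 1 ≤ n →
      (torsionSub d n).comap q ≠ ⊤ ∧ IsClosed (((torsionSub d n).comap q : Subgroup H) : Set H) := by
    intro n hn
    constructor
    · intro htop
      apply torsionSub_ne_top d n hd hn
      rw [Subgroup.eq_top_iff']
      intro v
      obtain ⟨x, rfl⟩ := hqs v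
      have hx : x ∈ (torsionSub d n).comap q := htop ▸ Subgroup.mem_top x
      exact Subgroup.mem_comap.mp hx
    · have : (((torsionSub d n).comap q : Subgroup H) : Set H)
          = q ⁻¹' ((torsionSub d n : Subgroup _) : Set (Fin d → Circle)) := rfl
      rw [this]
      exact (torsionSub_closed d n).preimage hqc
  refine ⟨part1, ?_, ?_⟩
  -- Part 2
  · rw [Metric.tendsto_atTop]
    intro ε hε
    obtain ⟨N, -, hN⟩ := key_approx hbi q hqc hqs (half_pos hε)
    refine ⟨N, fun n hn => ?_⟩
    have hle : Metric.hausdorffDist (((torsionSub d n).comap q : Subgroup H) : Set H) Set.univ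
        ≤ ε / 2 := by
      apply Metric.hausdorffDist_le_of_mem_dist (le_of_lt (half_pos hε))
      · intro x _
        exact ⟨x, Set.mem_univ x, by simp; positivity⟩
      · intro x _
        obtain ⟨z, hz, hdist⟩ := hN n hn x
        exact ⟨z, hz, hdist⟩
    rw [Real.dist_eq, sub_zero, abs_of_nonneg Metric.hausdorffDist_nonneg]
    linarith
  -- Parts 3 & 4
  · have hind : Topology.IsInducing
        (fun K : SubG H => (⟨(K.1 : Set H), K.2⟩ : TopologicalSpace.Closeds H)) := ⟨rfl⟩
    set f : SubG H → TopologicalSpace.Closeds H :=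
      fun K => (⟨(K.1 : Set H), K.2⟩ : TopologicalSpace.Closeds H) with hf
    set u : ℕ → SubG H :=
      fun n => ⟨(torsionSub d ((n+1).factorial)).comap q,
        (part1 ((n+1).factorial) (Nat.factorial_pos _)).2⟩ with hu
    have hne : ∀ n, u n ≠ topSub H := by
      intro n hEq
      exact (part1 ((n+1).factorial) (Nat.factorial_pos _)).1 (congrArg Subtype.val hEq)
    have hmono : Monotone (fun n => f (u n)) := by
      intro m m' hmm'
      have hdvd : (m+1).factorial ∣ (m'+1).factorial :=
        Nat.factorial_dvd_factorial (by omega)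
      have hsub : (torsionSub d ((m+1).factorial)).comap q
          ≤ (torsionSub d ((m'+1).factorial)).comap q := by
        apply Subgroup.comap_mono
        intro v hv
        rw [mem_torsionSub] at hv ⊢
        intro i
        obtain ⟨e, he⟩ := hdvd
        rw [he, pow_mul, hv i, one_pow]
      intro x hx
      exact hsub hx
    set c : OmegaCompletePartialOrder.Chain (TopologicalSpace.Closeds H) :=
      ⟨fun n => f (u n), hmono⟩ with hcdef
    have hdense : Dense (⋃ m : ℕ,
        (((torsionSub d ((m+1).factorial)).comap q : Subgroup H) : Set H)) := by
      rw [Metric.dense_iff]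
      intro x r hr
      obtain ⟨N, -, hN⟩ := key_approx hbi q hqc hqs (half_pos hr)
      have hle : N ≤ (N+1).factorial := le_trans (Nat.le_succ N) (Nat.self_le_factorial _)
      obtain ⟨z, hz, hdist⟩ := hN ((N+1).factorial) hle x
      refine ⟨z, Metric.mem_ball.mpr ?_, Set.mem_iUnion.mpr ⟨N, hz⟩⟩
      rw [dist_comm]
      linarith [half_pos hr]
    have hcoe : ∀ m : ℕ, ((c m : TopologicalSpace.Closeds H) : Set H)
        = (((torsionSub d ((m+1).factorial)).comap q : Subgroup H) : Set H) := fun m => rfl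
    have hωtop : OmegaCompletePartialOrder.ωSup c = f (topSub H) := by
      apply TopologicalSpace.Closeds.ext
      have h1 : ((f (topSub H) : TopologicalSpace.Closeds H) : Set H) = Set.univ := by
        show ((⊤ : Subgroup H) : Set H) = Set.univ
        exact Subgroup.coe_top
      rw [h1]
      apply Set.eq_univ_of_univ_subset
      rw [← hdense.closure_eq]
      apply closure_minimal
      · apply Set.iUnion_subset
        intro m
        rw [← hcoe m]
        exact fun x hx => (OmegaCompletePartialOrder.le_ωSup c m) hx
      · exact (OmegaCompletePartialOrder.ωSup c).isClosed
    have htendsto : Filter.Tendsto u Filter.atTop (nhds (topSub H)) := by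
      rw [hind.tendsto_nhds_iff, EMetric.tendsto_atTop]
      intro ε hε
      obtain ⟨r, -, hr0, hrε⟩ := ENNReal.lt_iff_exists_real_btwn.mp hε
      have hr : 0 < r := ENNReal.ofReal_pos.mp hr0
      obtain ⟨N, -, hN⟩ := key_approx hbi q hqc hqs (half_pos hr)
      refine ⟨N, fun n hn => ?_⟩
      rw [TopologicalSpace.Closeds.edist_eq]
      refine lt_of_le_of_lt ?_ hrε
      apply Metric.hausdorffEDist_le_of_mem_edist
      · intro x _
        refine ⟨x, ?_, by rw [edist_self]; exact zero_le⟩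
        show x ∈ ((⊤ : Subgroup H) : Set H)
        exact Subgroup.mem_top x
      · intro x _
        have hle : N ≤ (n+1).factorial :=
          le_trans hn (le_trans (Nat.le_succ n) (Nat.self_le_factorial _))
        obtain ⟨z, hz, hdist⟩ := hN ((n+1).factorial) hle x
        refine ⟨z, hz, ?_⟩
        rw [edist_dist]
        exact ENNReal.ofReal_le_ofReal (by linarith [half_pos hr])
    refine ⟨?_, u, hne, htendsto⟩
    intro hopen
    obtain ⟨n, hn⟩ := (htendsto.eventually (hopen.mem_nhds rfl)).exists
    exact hne n hn
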